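/- Let g : Z ⟶ Y and f : Y ⟶ X be R-maps in a π-clan (C, R); set q := f_* g, let f' : f ×_X q ⟶ f_* Z be the pullback of f along q and ε : f ×_X q ⟶ Z the counit of f^* ⊣ f_* at g. Suppose h : W ⟶ Z is an R-map which is a morphism between objects W and Z of R(Y). Let H be any class of maps in C stable under pre- and post-composition with isomorphisms. Then f_* h (the image of h under the pushforward functor f_* : R(Y) ⟶ R(X)) is an H-map if and only if the underlying map of the object f'_*(ε^* h) of R(f_* Z) is an H-map. -/
import Mathlib


namespace Paper

open CategoryTheory Limits

universe v u

variable {C : Type u} [Category.{v} C]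

/-- A universe in a category `C`: a morphism `tp : Tm ⟶ Ty` together with chosen
pullbacks (context extensions) along every `A : Γ ⟶ Ty`. -/
structure Univ (C : Type u) [Category.{v} C] where
  Tm : C
  Ty : C
  tp : Tm ⟶ Ty
  ext : ∀ {Γ : C}, (Γ ⟶ Ty) → C
  disp : ∀ {Γ : C} (A : Γ ⟶ Ty), ext A ⟶ Γ
  var : ∀ {Γ : C} (A : Γ ⟶ Ty), ext A ⟶ Tm
  isPullback : ∀ {Γ : C} (A : Γ ⟶ Ty), IsPullback (var A) (disp A) tp A

/-- The induced map `σ.a : Δ ⟶ Γ.A` into the chosen pullback. -/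
noncomputable def Univ.substCons (U : Univ C) {Δ Γ : C} (σ : Δ ⟶ Γ) (A : Γ ⟶ U.Ty)
    (a : Δ ⟶ U.Tm) (h : a ≫ U.tp = σ ≫ A) : Δ ⟶ U.ext A :=
  (U.isPullback A).lift a σ h

@[simp] lemma Univ.substCons_var (U : Univ C) {Δ Γ : C} (σ : Δ ⟶ Γ) (A : Γ ⟶ U.Ty)
    (a : Δ ⟶ U.Tm) (h : a ≫ U.tp = σ ≫ A) : U.substCons σ A a h ≫ U.var A = a :=
  (U.isPullback A).lift_fst a σ h

@[simp] lemma Univ.substCons_disp (U : Univ C) {Δ Γ : C} (σ : Δ ⟶ Γ) (A : Γ ⟶ U.Ty)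
    (a : Δ ⟶ U.Tm) (h : a ≫ U.tp = σ ≫ A) : U.substCons σ A a h ≫ U.disp A = σ :=
  (U.isPullback A).lift_snd a σ h

/-- The weakening `σ̃ := (d_{σ≫A} ≫ σ).var_{σ≫A} : Δ.(σ ≫ A) ⟶ Γ.A`. -/
noncomputable def Univ.wk (U : Univ C) {Δ Γ : C} (σ : Δ ⟶ Γ) (A : Γ ⟶ U.Ty) :
    U.ext (σ ≫ A) ⟶ U.ext A :=
  U.substCons (U.disp (σ ≫ A) ≫ σ) A (U.var (σ ≫ A))
    (by rw [(U.isPullback (σ ≫ A)).w, Category.assoc])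

/-- The section `id_Γ.a : Γ ⟶ Γ.A` of a term `a` of type `A`. -/
noncomputable def Univ.sec (U : Univ C) {Γ : C} (A : Γ ⟶ U.Ty) (a : Γ ⟶ U.Tm)
    (ha : a ≫ U.tp = A) : Γ ⟶ U.ext A :=
  U.substCons (𝟙 Γ) A a (by rw [ha, Category.id_comp])

@[simp] lemma Univ.sec_var (U : Univ C) {Γ : C} (A : Γ ⟶ U.Ty) (a : Γ ⟶ U.Tm)
    (ha : a ≫ U.tp = A) : U.sec A a ha ≫ U.var A = a :=
  U.substCons_var _ _ _ _

@[simp] lemma Univ.sec_disp (U : Univ C) {Γ : C} (A : Γ ⟶ U.Ty) (a : Γ ⟶ U.Tm)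
    (ha : a ≫ U.tp = A) : U.sec A a ha ≫ U.disp A = 𝟙 Γ :=
  U.substCons_disp _ _ _ _

/-- An elementary `Unit`-type structure on a universe. -/
structure ElemUnit (U : Univ C) where
  unitTy : ∀ (Γ : C), Γ ⟶ U.Ty
  unitTy_stable : ∀ {Δ Γ : C} (σ : Δ ⟶ Γ), σ ≫ unitTy Γ = unitTy Δ
  unitTm : ∀ (Γ : C), Γ ⟶ U.Tm
  unitTm_tp : ∀ (Γ : C), unitTm Γ ≫ U.tp = unitTy Γ
  unitTm_unique : ∀ {Γ : C} (u : Γ ⟶ U.Tm), u ≫ U.tp = unitTy Γ → u = unitTm Γ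

/-- An elementary `Π`-type structure on a universe (unlam-stability is not assumed). -/
structure ElemPi (U : Univ C) where
  Pi : ∀ {Γ : C} (A : Γ ⟶ U.Ty), (U.ext A ⟶ U.Ty) → (Γ ⟶ U.Ty)
  Pi_stable : ∀ {Δ Γ : C} (σ : Δ ⟶ Γ) (A : Γ ⟶ U.Ty) (B : U.ext A ⟶ U.Ty),
    Pi (σ ≫ A) (U.wk σ A ≫ B) = σ ≫ Pi A B
  lam : ∀ {Γ : C} (A : Γ ⟶ U.Ty), (U.ext A ⟶ U.Tm) → (Γ ⟶ U.Tm)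
  lam_tp : ∀ {Γ : C} (A : Γ ⟶ U.Ty) (b : U.ext A ⟶ U.Tm),
    lam A b ≫ U.tp = Pi A (b ≫ U.tp)
  lam_stable : ∀ {Δ Γ : C} (σ : Δ ⟶ Γ) (A : Γ ⟶ U.Ty) (b : U.ext A ⟶ U.Tm),
    lam (σ ≫ A) (U.wk σ A ≫ b) = σ ≫ lam A b
  unlam : ∀ {Γ : C} (A : Γ ⟶ U.Ty) (B : U.ext A ⟶ U.Ty) (f : Γ ⟶ U.Tm),
    f ≫ U.tp = Pi A B → (U.ext A ⟶ U.Tm)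
  unlam_tp : ∀ {Γ : C} (A : Γ ⟶ U.Ty) (B : U.ext A ⟶ U.Ty) (f : Γ ⟶ U.Tm)
    (hf : f ≫ U.tp = Pi A B), unlam A B f hf ≫ U.tp = B
  unlam_lam : ∀ {Γ : C} (A : Γ ⟶ U.Ty) (b : U.ext A ⟶ U.Tm)
    (h : lam A b ≫ U.tp = Pi A (b ≫ U.tp)), unlam A (b ≫ U.tp) (lam A b) h = b
  lam_unlam : ∀ {Γ : C} (A : Γ ⟶ U.Ty) (B : U.ext A ⟶ U.Ty) (f : Γ ⟶ U.Tm)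
    (hf : f ≫ U.tp = Pi A B), lam A (unlam A B f hf) = f

/-- An elementary `Σ`-type structure on a universe (fst/snd-stability is not assumed). -/
structure ElemSigma (U : Univ C) where
  Sig : ∀ {Γ : C} (A : Γ ⟶ U.Ty), (U.ext A ⟶ U.Ty) → (Γ ⟶ U.Ty)
  Sig_stable : ∀ {Δ Γ : C} (σ : Δ ⟶ Γ) (A : Γ ⟶ U.Ty) (B : U.ext A ⟶ U.Ty),
    Sig (σ ≫ A) (U.wk σ A ≫ B) = σ ≫ Sig A B
  pair : ∀ {Γ : C} (A : Γ ⟶ U.Ty) (B : U.ext A ⟶ U.Ty) (a b : Γ ⟶ U.Tm)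
    (ha : a ≫ U.tp = A), b ≫ U.tp = U.sec A a ha ≫ B → (Γ ⟶ U.Tm)
  pair_tp : ∀ {Γ : C} (A : Γ ⟶ U.Ty) (B : U.ext A ⟶ U.Ty) (a b : Γ ⟶ U.Tm)
    (ha : a ≫ U.tp = A) (hb : b ≫ U.tp = U.sec A a ha ≫ B),
    pair A B a b ha hb ≫ U.tp = Sig A B
  pair_stable : ∀ {Δ Γ : C} (σ : Δ ⟶ Γ) (A : Γ ⟶ U.Ty) (B : U.ext A ⟶ U.Ty)
    (a b : Γ ⟶ U.Tm) (ha : a ≫ U.tp = A) (hb : b ≫ U.tp = U.sec A a ha ≫ B)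
    (ha' : (σ ≫ a) ≫ U.tp = σ ≫ A)
    (hb' : (σ ≫ b) ≫ U.tp = U.sec (σ ≫ A) (σ ≫ a) ha' ≫ (U.wk σ A ≫ B)),
    pair (σ ≫ A) (U.wk σ A ≫ B) (σ ≫ a) (σ ≫ b) ha' hb' = σ ≫ pair A B a b ha hb
  fst : ∀ {Γ : C} (A : Γ ⟶ U.Ty) (B : U.ext A ⟶ U.Ty) (s : Γ ⟶ U.Tm),
    s ≫ U.tp = Sig A B → (Γ ⟶ U.Tm)
  snd : ∀ {Γ : C} (A : Γ ⟶ U.Ty) (B : U.ext A ⟶ U.Ty) (s : Γ ⟶ U.Tm),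
    s ≫ U.tp = Sig A B → (Γ ⟶ U.Tm)
  fst_tp : ∀ {Γ : C} (A : Γ ⟶ U.Ty) (B : U.ext A ⟶ U.Ty) (s : Γ ⟶ U.Tm)
    (hs : s ≫ U.tp = Sig A B), fst A B s hs ≫ U.tp = A
  snd_tp : ∀ {Γ : C} (A : Γ ⟶ U.Ty) (B : U.ext A ⟶ U.Ty) (s : Γ ⟶ U.Tm)
    (hs : s ≫ U.tp = Sig A B),
    snd A B s hs ≫ U.tp = U.sec A (fst A B s hs) (fst_tp A B s hs) ≫ B
  fst_pair : ∀ {Γ : C} (A : Γ ⟶ U.Ty) (B : U.ext A ⟶ U.Ty) (a b : Γ ⟶ U.Tm)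
    (ha : a ≫ U.tp = A) (hb : b ≫ U.tp = U.sec A a ha ≫ B)
    (h : pair A B a b ha hb ≫ U.tp = Sig A B), fst A B (pair A B a b ha hb) h = a
  snd_pair : ∀ {Γ : C} (A : Γ ⟶ U.Ty) (B : U.ext A ⟶ U.Ty) (a b : Γ ⟶ U.Tm)
    (ha : a ≫ U.tp = A) (hb : b ≫ U.tp = U.sec A a ha ≫ B)
    (h : pair A B a b ha hb ≫ U.tp = Sig A B), snd A B (pair A B a b ha hb) h = b
  pair_fst_snd : ∀ {Γ : C} (A : Γ ⟶ U.Ty) (B : U.ext A ⟶ U.Ty) (s : Γ ⟶ U.Tm)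
    (hs : s ≫ U.tp = Sig A B) (h1 : fst A B s hs ≫ U.tp = A)
    (h2 : snd A B s hs ≫ U.tp = U.sec A (fst A B s hs) h1 ≫ B),
    pair A B (fst A B s hs) (snd A B s hs) h1 h2 = s

/-- A weak pullback structure on a commutative square. -/
structure WeakPullbackStr {P X Y Z : C} (g' : P ⟶ X) (f' : P ⟶ Y) (f : X ⟶ Z) (g : Y ⟶ Z) where
  lift : ∀ {W : C} (x : W ⟶ X) (y : W ⟶ Y), x ≫ f = y ≫ g → (W ⟶ P)
  lift_fst : ∀ {W : C} (x : W ⟶ X) (y : W ⟶ Y) (h : x ≫ f = y ≫ g), lift x y h ≫ g' = x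
  lift_snd : ∀ {W : C} (x : W ⟶ X) (y : W ⟶ Y) (h : x ≫ f = y ≫ g), lift x y h ≫ f' = y

/-- Coherence of a weak pullback structure: the chosen lifts commute with all cone morphisms. -/
def WeakPullbackStr.Coherent {P X Y Z : C} {g' : P ⟶ X} {f' : P ⟶ Y} {f : X ⟶ Z} {g : Y ⟶ Z}
    (w : WeakPullbackStr g' f' f g) : Prop :=
  ∀ {V W : C} (σ : V ⟶ W) (x : W ⟶ X) (y : W ⟶ Y) (h : x ≫ f = y ≫ g)
    (h' : (σ ≫ x) ≫ f = (σ ≫ y) ≫ g),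
    σ ≫ w.lift x y h = w.lift (σ ≫ x) (σ ≫ y) h'

end Paper

namespace Paper

open CategoryTheory Limits

universe v u

variable {C : Type u} [Category.{v} C]

/-- A pushforward of `g : Z ⟶ Y` along `f : Y ⟶ X`, presented by a counit and the
universal property `Hom_{C/Y}(f^* h, g) ≅ Hom_{C/X}(h, f_* g)`, natural in `h ∈ C/X`
(the naturality being packaged by the counit formulation). -/
structure Pushforward {X Y Z : C} (f : Y ⟶ X) (g : Z ⟶ Y) where
  obj : C
  π : obj ⟶ X
  /-- domain of the counit: a pullback of `f` along `π` -/
  cod : C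
  codFst : cod ⟶ obj
  codSnd : cod ⟶ Y
  cod_isPullback : IsPullback codFst codSnd π f
  /-- the counit `f^*(f_* g) ⟶ g`, a morphism over `Y` -/
  ε : cod ⟶ Z
  ε_comm : ε ≫ g = codSnd
  /-- transposition: a map `f^* h ⟶ g` over `Y` induces a map `h ⟶ f_* g` over `X` -/
  lift : ∀ {A Q : C} (h : A ⟶ X) (qf : Q ⟶ A) (qs : Q ⟶ Y),
    IsPullback qf qs h f → ∀ (k : Q ⟶ Z), k ≫ g = qs → (A ⟶ obj)
  lift_π : ∀ {A Q : C} (h : A ⟶ X) (qf : Q ⟶ A) (qs : Q ⟶ Y)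
    (hq : IsPullback qf qs h f) (k : Q ⟶ Z) (hk : k ≫ g = qs),
    lift h qf qs hq k hk ≫ π = h
  lift_ε : ∀ {A Q : C} (h : A ⟶ X) (qf : Q ⟶ A) (qs : Q ⟶ Y)
    (hq : IsPullback qf qs h f) (k : Q ⟶ Z) (hk : k ≫ g = qs),
    cod_isPullback.lift (qf ≫ lift h qf qs hq k hk) qs
      (by rw [Category.assoc, lift_π h qf qs hq k hk, hq.w]) ≫ ε = k
  lift_unique : ∀ {A Q : C} (h : A ⟶ X) (qf : Q ⟶ A) (qs : Q ⟶ Y)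
    (hq : IsPullback qf qs h f) (k : Q ⟶ Z) (hk : k ≫ g = qs)
    (m : A ⟶ obj) (hm : m ≫ π = h),
    cod_isPullback.lift (qf ≫ m) qs (by rw [Category.assoc, hm, hq.w]) ≫ ε = k →
    m = lift h qf qs hq k hk

end Paper

namespace Paper

open CategoryTheory Limits

universe v u

variable {C : Type u} [Category.{v} C]

/-- A π-clan: a class `R` of maps containing all isomorphisms, closed under
composition, stable under pullback (pullbacks of `R`-maps along arbitrary maps
exist), closed under pushforward (with chosen pushforward data), together with a
terminal object for which every map `X ⟶ 1` is an `R`-map. -/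
structure PiClan (C : Type u) [Category.{v} C] where
  R : MorphismProperty C
  hasPb : ∀ {A X Y : C} (h : A ⟶ X) (f : Y ⟶ X), R f → HasPullback h f
  isoMem : ∀ {X Y : C} (e : X ⟶ Y), IsIso e → R e
  compMem : ∀ {X Y Z : C} (f : X ⟶ Y) (g : Y ⟶ Z), R f → R g → R (f ≫ g)
  pbMem : ∀ {P A X Y : C} {fst : P ⟶ A} {snd : P ⟶ Y} {h : A ⟶ X} {f : Y ⟶ X},
    IsPullback fst snd h f → R f → R fst
  push : ∀ {X Y Z : C} (f : Y ⟶ X) (g : Z ⟶ Y), R f → R g → Pushforward f g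
  pushMem : ∀ {X Y Z : C} (f : Y ⟶ X) (g : Z ⟶ Y) (hf : R f) (hg : R g),
    R (push f g hf hg).π
  term : C
  isTerm : IsTerminal term
  allObj : ∀ X : C, R (isTerm.from X)

namespace PiClan

variable (D : PiClan C)

/-- The chosen pullback of an `R`-map `f` along an arbitrary map `h`. -/
noncomputable def pb {A X Y : C} (h : A ⟶ X) (f : Y ⟶ X) (hf : D.R f) : C :=
  haveI := D.hasPb h f hf
  pullback h f

noncomputable def pbFst {A X Y : C} (h : A ⟶ X) (f : Y ⟶ X) (hf : D.R f) :
    D.pb h f hf ⟶ A :=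
  haveI := D.hasPb h f hf
  pullback.fst h f

noncomputable def pbSnd {A X Y : C} (h : A ⟶ X) (f : Y ⟶ X) (hf : D.R f) :
    D.pb h f hf ⟶ Y :=
  haveI := D.hasPb h f hf
  pullback.snd h f

lemma pb_isPullback {A X Y : C} (h : A ⟶ X) (f : Y ⟶ X) (hf : D.R f) :
    IsPullback (D.pbFst h f hf) (D.pbSnd h f hf) h f :=
  haveI := D.hasPb h f hf
  IsPullback.of_hasPullback h f

/-- The pullback of an `R`-map is an `R`-map. -/
lemma pbFst_mem {A X Y : C} (h : A ⟶ X) (f : Y ⟶ X) (hf : D.R f) :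
    D.R (D.pbFst h f hf) :=
  D.pbMem (D.pb_isPullback h f hf) hf

lemma pbSnd_mem {A X Y : C} (h : A ⟶ X) (f : Y ⟶ X) (hf : D.R f) (hh : D.R h) :
    D.R (D.pbSnd h f hf) :=
  D.pbMem (D.pb_isPullback h f hf).flip hh

/-- Reindexing of pullbacks along a map of bases (`σ ×_X Y`). -/
noncomputable def pbMapLeft {A' A X Y : C} (σ : A' ⟶ A) (h : A ⟶ X) (f : Y ⟶ X)
    (hf : D.R f) : D.pb (σ ≫ h) f hf ⟶ D.pb h f hf :=
  (D.pb_isPullback h f hf).lift (D.pbFst (σ ≫ h) f hf ≫ σ) (D.pbSnd (σ ≫ h) f hf)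
    (by rw [Category.assoc, ← (D.pb_isPullback (σ ≫ h) f hf).w])

/-- The map on pullbacks induced by a morphism `t : g₁ ⟶ g₂` over `X`. -/
noncomputable def pbMapRight {A X Z₁ Z₂ : C} (h : A ⟶ X) (g₁ : Z₁ ⟶ X) (g₂ : Z₂ ⟶ X)
    (hg₁ : D.R g₁) (hg₂ : D.R g₂) (t : Z₁ ⟶ Z₂) (ht : t ≫ g₂ = g₁) :
    D.pb h g₁ hg₁ ⟶ D.pb h g₂ hg₂ :=
  (D.pb_isPullback h g₂ hg₂).lift (D.pbFst h g₁ hg₁) (D.pbSnd h g₁ hg₁ ≫ t)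
    (by rw [Category.assoc, ht, (D.pb_isPullback h g₁ hg₁).w])

@[simp] lemma pbMapRight_fst {A X Z₁ Z₂ : C} (h : A ⟶ X) (g₁ : Z₁ ⟶ X) (g₂ : Z₂ ⟶ X)
    (hg₁ : D.R g₁) (hg₂ : D.R g₂) (t : Z₁ ⟶ Z₂) (ht : t ≫ g₂ = g₁) :
    D.pbMapRight h g₁ g₂ hg₁ hg₂ t ht ≫ D.pbFst h g₂ hg₂ = D.pbFst h g₁ hg₁ :=
  (D.pb_isPullback h g₂ hg₂).lift_fst _ _ _

/-- The map on pullbacks induced on the `R`-map legs by `ρ` with `ρ ≫ f' = f`,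
i.e. `h ×_X ρ : h ×_X f ⟶ h ×_X f'`. -/
noncomputable def pbMapOver {A X E E' : C} (h : A ⟶ X) (f : E ⟶ X) (f' : E' ⟶ X)
    (hf : D.R f) (hf' : D.R f') (ρ : E ⟶ E') (w : ρ ≫ f' = f) :
    D.pb h f hf ⟶ D.pb h f' hf' :=
  (D.pb_isPullback h f' hf').lift (D.pbFst h f hf) (D.pbSnd h f hf ≫ ρ)
    (by rw [Category.assoc, w, (D.pb_isPullback h f hf).w])

/-- Functorial action of the pushforward `f_*` on a morphism `t : g₁ ⟶ g₂` of `R(Y)`. -/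
noncomputable def pushMap {X Y Z₁ Z₂ : C} (f : Y ⟶ X) (g₁ : Z₁ ⟶ Y) (g₂ : Z₂ ⟶ Y)
    (hf : D.R f) (hg₁ : D.R g₁) (hg₂ : D.R g₂) (t : Z₁ ⟶ Z₂) (ht : t ≫ g₂ = g₁) :
    (D.push f g₁ hf hg₁).obj ⟶ (D.push f g₂ hf hg₂).obj :=
  (D.push f g₂ hf hg₂).lift (D.push f g₁ hf hg₁).π
    (D.push f g₁ hf hg₁).codFst (D.push f g₁ hf hg₁).codSnd
    (D.push f g₁ hf hg₁).cod_isPullback ((D.push f g₁ hf hg₁).ε ≫ t)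
    (by rw [Category.assoc, ht, (D.push f g₁ hf hg₁).ε_comm])

@[simp] lemma pushMap_π {X Y Z₁ Z₂ : C} (f : Y ⟶ X) (g₁ : Z₁ ⟶ Y) (g₂ : Z₂ ⟶ Y)
    (hf : D.R f) (hg₁ : D.R g₁) (hg₂ : D.R g₂) (t : Z₁ ⟶ Z₂) (ht : t ≫ g₂ = g₁) :
    D.pushMap f g₁ g₂ hf hg₁ hg₂ t ht ≫ (D.push f g₂ hf hg₂).π =
      (D.push f g₁ hf hg₁).π :=
  (D.push f g₂ hf hg₂).lift_π _ _ _ _ _ _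

section Polynomial

/-- The base change `E^* X` of `X` to an object over `E`, i.e. the product `E × X`
realized as a pullback over the terminal object. -/
noncomputable def estar (E X : C) : C :=
  D.pb (D.isTerm.from X) (D.isTerm.from E) (D.allObj E)

noncomputable def estarFst (E X : C) : D.estar E X ⟶ X :=
  D.pbFst (D.isTerm.from X) (D.isTerm.from E) (D.allObj E)

noncomputable def estarSnd (E X : C) : D.estar E X ⟶ E :=
  D.pbSnd (D.isTerm.from X) (D.isTerm.from E) (D.allObj E)

lemma estarSnd_mem (E X : C) : D.R (D.estarSnd E X) :=
  D.pbSnd_mem _ _ _ (D.allObj X)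

/-- The pushforward stage of the polynomial functor `P_f` applied to `X`:
`f_* (E^* X)` as an object over `B`. -/
noncomputable def polyPush {E B : C} (f : E ⟶ B) (hf : D.R f) (X : C) :
    Pushforward f (D.estarSnd E X) :=
  D.push f (D.estarSnd E X) hf (D.estarSnd_mem E X)

/-- The object `P_f X = B_! (f_* (E^* X))` of the polynomial functor. -/
noncomputable def polyObj {E B : C} (f : E ⟶ B) (hf : D.R f) (X : C) : C :=
  (D.polyPush f hf X).obj

/-- The universal first projection `fstProj : P_f X ⟶ B`. -/
noncomputable def fstProj {E B : C} (f : E ⟶ B) (hf : D.R f) (X : C) :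
    D.polyObj f hf X ⟶ B :=
  (D.polyPush f hf X).π

/-- The universal second projection `sndProj : fstProj ×_B f ⟶ X`. -/
noncomputable def sndProj {E B : C} (f : E ⟶ B) (hf : D.R f) (X : C) :
    D.pb (D.fstProj f hf X) f hf ⟶ X :=
  (D.polyPush f hf X).cod_isPullback.lift (D.pbFst (D.fstProj f hf X) f hf)
      (D.pbSnd (D.fstProj f hf X) f hf) (D.pb_isPullback (D.fstProj f hf X) f hf).w
    ≫ (D.polyPush f hf X).ε ≫ D.estarFst E X

/-- The second component of a generalized element `t : Γ ⟶ P_f X`, relative to a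
chosen presentation `g` of its first component. -/
noncomputable def polySndAt {E B : C} (f : E ⟶ B) (hf : D.R f) (X : C) {Γ : C}
    (g : Γ ⟶ B) (t : Γ ⟶ D.polyObj f hf X) (ht : t ≫ D.fstProj f hf X = g) :
    D.pb g f hf ⟶ X :=
  (D.pb_isPullback (D.fstProj f hf X) f hf).lift (D.pbFst g f hf ≫ t) (D.pbSnd g f hf)
      (by rw [Category.assoc, ht]; exact (D.pb_isPullback g f hf).w)
    ≫ D.sndProj f hf X

/-- The second component `snd(t) = (t ×_B f) ≫ sndProj` of `t : Γ ⟶ P_f X`. -/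
noncomputable def polySnd {E B : C} (f : E ⟶ B) (hf : D.R f) (X : C) {Γ : C}
    (t : Γ ⟶ D.polyObj f hf X) : D.pb (t ≫ D.fstProj f hf X) f hf ⟶ X :=
  D.polySndAt f hf X (t ≫ D.fstProj f hf X) t rfl

/-- The generalized element `Γ ⟶ P_f X` classifying a pair `(g, x)`. -/
noncomputable def polyPair {E B : C} (f : E ⟶ B) (hf : D.R f) (X : C) {Γ : C}
    (g : Γ ⟶ B) (x : D.pb g f hf ⟶ X) : Γ ⟶ D.polyObj f hf X :=
  (D.polyPush f hf X).lift g (D.pbFst g f hf) (D.pbSnd g f hf) (D.pb_isPullback g f hf)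
    ((D.pb_isPullback (D.isTerm.from X) (D.isTerm.from E) (D.allObj E)).lift
      x (D.pbSnd g f hf) (D.isTerm.hom_ext _ _))
    ((D.pb_isPullback (D.isTerm.from X) (D.isTerm.from E) (D.allObj E)).lift_snd _ _ _)

@[simp] lemma polyPair_fst {E B : C} (f : E ⟶ B) (hf : D.R f) (X : C) {Γ : C}
    (g : Γ ⟶ B) (x : D.pb g f hf ⟶ X) :
    D.polyPair f hf X g x ≫ D.fstProj f hf X = g :=
  (D.polyPush f hf X).lift_π _ _ _ _ _ _

/-- The functorial action of the polynomial functor `P_f` on `u : X ⟶ X'`. -/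
noncomputable def polyMap {E B : C} (f : E ⟶ B) (hf : D.R f) {X X' : C} (u : X ⟶ X') :
    D.polyObj f hf X ⟶ D.polyObj f hf X' :=
  D.polyPair f hf X' (D.fstProj f hf X) (D.sndProj f hf X ≫ u)

/-- The domain of the polynomial composition `f' ▷ f`. -/
noncomputable def compDom {E B E' B' : C} (f : E ⟶ B) (hf : D.R f)
    (f' : E' ⟶ B') (hf' : D.R f') : C :=
  D.pb (D.sndProj f hf B') f' hf'

/-- The polynomial composition `f' ▷ f : compDom ⟶ P_f B'`. -/
noncomputable def polyComp {E B E' B' : C} (f : E ⟶ B) (hf : D.R f)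
    (f' : E' ⟶ B') (hf' : D.R f') : D.compDom f hf f' hf' ⟶ D.polyObj f hf B' :=
  D.pbFst (D.sndProj f hf B') f' hf' ≫ D.pbFst (D.fstProj f hf B') f hf

/-- The map into `fstProj ×_B f` classifying `(polyPair g x, a)`. -/
noncomputable def polyMid {E B : C} (f : E ⟶ B) (hf : D.R f) (X : C) {Γ : C}
    (g : Γ ⟶ B) (x : D.pb g f hf ⟶ X) (a : Γ ⟶ E) (ha : a ≫ f = g) :
    Γ ⟶ D.pb (D.fstProj f hf X) f hf :=
  (D.pb_isPullback (D.fstProj f hf X) f hf).lift (D.polyPair f hf X g x) a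
    (by rw [D.polyPair_fst]; exact ha.symm)

/-- The generalized element of `compDom` classifying `(g, x, a, b)`. -/
noncomputable def compDomPair {E B E' B' : C} (f : E ⟶ B) (hf : D.R f)
    (f' : E' ⟶ B') (hf' : D.R f') {Γ : C} (g : Γ ⟶ B) (x : D.pb g f hf ⟶ B')
    (a : Γ ⟶ E) (ha : a ≫ f = g) (b : Γ ⟶ E')
    (hb : b ≫ f' = D.polyMid f hf B' g x a ha ≫ D.sndProj f hf B') :
    Γ ⟶ D.compDom f hf f' hf' :=
  (D.pb_isPullback (D.sndProj f hf B') f' hf').lift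
    (D.polyMid f hf B' g x a ha) b hb.symm

end Polynomial

end PiClan

/-- The principal class generated by `t`: all morphisms arising as a pullback of `t`. -/
def principal {Y X : C} (t : Y ⟶ X) : MorphismProperty C :=
  fun E B f => ∃ (top : E ⟶ Y) (base : B ⟶ X), IsPullback top f t base

/-- The property of being a π-preclan (Prop-valued, existence form). -/
structure IsPiPreclan (R : MorphismProperty C) : Prop where
  hasPb : ∀ {A X Y : C} (h : A ⟶ X) (f : Y ⟶ X), R f → HasPullback h f
  pbMem : ∀ {P A X Y : C} {fst : P ⟶ A} {snd : P ⟶ Y} {h : A ⟶ X} {f : Y ⟶ X},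
    IsPullback fst snd h f → R f → R fst
  isoMem : ∀ {X Y : C} (e : X ⟶ Y), IsIso e → R e
  compMem : ∀ {X Y Z : C} (f : X ⟶ Y) (g : Y ⟶ Z), R f → R g → R (f ≫ g)
  pushClosed : ∀ {X Y Z : C} (f : Y ⟶ X) (g : Z ⟶ Y), R f → R g →
    ∃ p : Pushforward f g, R p.π

/-- The property of being a π-clan (Prop-valued): a π-preclan on a category with a
terminal object in which every map to a terminal object belongs to the class. -/
structure IsPiClan (R : MorphismProperty C) : Prop where
  toIsPiPreclan : IsPiPreclan R
  exists_terminal : ∃ T : C, Nonempty (IsTerminal T)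
  allObj : ∀ {X T : C}, IsTerminal T → ∀ f : X ⟶ T, R f

end Paper


namespace Paper

open CategoryTheory Limits

universe v u

variable {C : Type u} [Category.{v} C]

/-- Two maps into a pushforward agree if they agree over the base and have equal
transposes (counit composites). -/
lemma Pushforward.hom_ext' {X Y Z : C} {f : Y ⟶ X} {g : Z ⟶ Y} (p : Pushforward f g)
    {A Q' : C} {m m' : A ⟶ p.obj} {u : A ⟶ X} (hm : m ≫ p.π = u) (hm' : m' ≫ p.π = u)
    (qf : Q' ⟶ A) (qs : Q' ⟶ Y) (hq : IsPullback qf qs u f)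
    (hε : p.cod_isPullback.lift (qf ≫ m) qs (by rw [Category.assoc, hm]; exact hq.w) ≫ p.ε
        = p.cod_isPullback.lift (qf ≫ m') qs (by rw [Category.assoc, hm']; exact hq.w) ≫ p.ε) :
    m = m' := by
  have hk : (p.cod_isPullback.lift (qf ≫ m) qs
      (by rw [Category.assoc, hm]; exact hq.w) ≫ p.ε) ≫ g = qs := by
    rw [Category.assoc, p.ε_comm, p.cod_isPullback.lift_snd]
  have h1 := p.lift_unique u qf qs hq _ hk m hm rfl
  have h2 := p.lift_unique u qf qs hq _ hk m' hm' hε.symm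
  rw [h1, h2]

/-- Distributivity: `f_*(h ≫ g)` is isomorphic over `f_* g` to `f'_*(ε^* h)`. -/
lemma push_distrib {X Y Z W : C} {f : Y ⟶ X} {g : Z ⟶ Y} {h : W ⟶ Z}
    (P : Pushforward f g) (PW : Pushforward f (h ≫ g))
    {Pb : C} {e : Pb ⟶ P.cod} {s : Pb ⟶ W} (hpb : IsPullback e s P.ε h)
    (P' : Pushforward P.codFst e)
    (t : PW.obj ⟶ P.obj)
    (htdef : t = P.lift PW.π PW.codFst PW.codSnd PW.cod_isPullback (PW.ε ≫ h)
      (by rw [Category.assoc, PW.ε_comm])) :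
    ∃ i : PW.obj ≅ P'.obj, i.hom ≫ P'.π = t := by
  subst htdef
  set t := P.lift PW.π PW.codFst PW.codSnd PW.cod_isPullback (PW.ε ≫ h)
      (by rw [Category.assoc, PW.ε_comm]) with ht_def
  have ht : t ≫ P.π = PW.π := P.lift_π _ _ _ _ _ _
  have w0 : (PW.codFst ≫ t) ≫ P.π = PW.codSnd ≫ f := by
    rw [Category.assoc, ht]; exact PW.cod_isPullback.w
  set qs0 : PW.cod ⟶ P.cod := P.cod_isPullback.lift (PW.codFst ≫ t) PW.codSnd w0 with hqs0_def
  have hqs0_fst : qs0 ≫ P.codFst = PW.codFst ≫ t := P.cod_isPullback.lift_fst _ _ _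
  have hqs0_snd : qs0 ≫ P.codSnd = PW.codSnd := P.cod_isPullback.lift_snd _ _ _
  have hε0 : qs0 ≫ P.ε = PW.ε ≫ h :=
    P.lift_ε PW.π PW.codFst PW.codSnd PW.cod_isPullback (PW.ε ≫ h)
      (by rw [Category.assoc, PW.ε_comm])
  have big : IsPullback PW.codFst (qs0 ≫ P.codSnd) (t ≫ P.π) f := by
    rw [hqs0_snd, ht]; exact PW.cod_isPullback
  have hq1 : IsPullback PW.codFst qs0 t P.codFst :=
    big.of_bot hqs0_fst.symm P.cod_isPullback
  set k1 : PW.cod ⟶ Pb := hpb.lift qs0 PW.ε (by rw [hε0]) with hk1_def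
  have hk1e : k1 ≫ e = qs0 := hpb.lift_fst _ _ _
  have hk1s : k1 ≫ s = PW.ε := hpb.lift_snd _ _ _
  set α : PW.obj ⟶ P'.obj := P'.lift t PW.codFst qs0 hq1 k1 hk1e with hα_def
  have hα : α ≫ P'.π = t := P'.lift_π _ _ _ _ _ _
  set A1 : PW.cod ⟶ P'.cod := P'.cod_isPullback.lift (PW.codFst ≫ α) qs0
      (by rw [Category.assoc, hα]; exact hq1.w) with hA1_def
  have hA1f : A1 ≫ P'.codFst = PW.codFst ≫ α := P'.cod_isPullback.lift_fst _ _ _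
  have hA1s : A1 ≫ P'.codSnd = qs0 := P'.cod_isPullback.lift_snd _ _ _
  have hA1ε : A1 ≫ P'.ε = k1 := P'.lift_ε t PW.codFst qs0 hq1 k1 hk1e
  have hq2 : IsPullback P'.codFst (P'.codSnd ≫ P.codSnd) (P'.π ≫ P.π) f :=
    P'.cod_isPullback.paste_vert P.cod_isPullback
  have hk2 : (P'.ε ≫ s) ≫ (h ≫ g) = P'.codSnd ≫ P.codSnd := by
    have := hpb.w
    calc (P'.ε ≫ s) ≫ h ≫ g = P'.ε ≫ (s ≫ h) ≫ g := by simp [Category.assoc]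
      _ = P'.ε ≫ (e ≫ P.ε) ≫ g := by rw [← hpb.w]
      _ = (P'.ε ≫ e) ≫ P.ε ≫ g := by simp [Category.assoc]
      _ = P'.codSnd ≫ P.codSnd := by rw [P'.ε_comm, P.ε_comm]
  set β : P'.obj ⟶ PW.obj :=
    PW.lift (P'.π ≫ P.π) P'.codFst (P'.codSnd ≫ P.codSnd) hq2 (P'.ε ≫ s) hk2 with hβ_def
  have hβ : β ≫ PW.π = P'.π ≫ P.π := PW.lift_π _ _ _ _ _ _
  set B1 : P'.cod ⟶ PW.cod := PW.cod_isPullback.lift (P'.codFst ≫ β) (P'.codSnd ≫ P.codSnd)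
      (by rw [Category.assoc, hβ]; exact hq2.w) with hB1_def
  have hB1f : B1 ≫ PW.codFst = P'.codFst ≫ β := PW.cod_isPullback.lift_fst _ _ _
  have hB1s : B1 ≫ PW.codSnd = P'.codSnd ≫ P.codSnd := PW.cod_isPullback.lift_snd _ _ _
  have hB1ε : B1 ≫ PW.ε = P'.ε ≫ s :=
    PW.lift_ε (P'.π ≫ P.π) P'.codFst (P'.codSnd ≫ P.codSnd) hq2 (P'.ε ≫ s) hk2
  -- (II) : β ≫ t = P'.π
  have hβt : β ≫ t = P'.π := by
    refine P.hom_ext' (u := P'.π ≫ P.π) ?_ rfl P'.codFst (P'.codSnd ≫ P.codSnd) hq2 ?_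
    · rw [Category.assoc, ht, hβ]
    · have hLB : P.cod_isPullback.lift (P'.codFst ≫ β ≫ t) (P'.codSnd ≫ P.codSnd)
          (by rw [Category.assoc]
              rw [show (β ≫ t) ≫ P.π = P'.π ≫ P.π by rw [Category.assoc, ht, hβ]]
              exact hq2.w) = B1 ≫ qs0 := by
        apply P.cod_isPullback.hom_ext
        · rw [P.cod_isPullback.lift_fst, Category.assoc, hqs0_fst,
            reassoc_of% hB1f]
        · rw [P.cod_isPullback.lift_snd, Category.assoc, hqs0_snd, hB1s]
      have hLR : P.cod_isPullback.lift (P'.codFst ≫ P'.π) (P'.codSnd ≫ P.codSnd)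
          (by rw [Category.assoc]; exact hq2.w) = P'.codSnd := by
        apply P.cod_isPullback.hom_ext
        · rw [P.cod_isPullback.lift_fst]; exact P'.cod_isPullback.w
        · rw [P.cod_isPullback.lift_snd]
      rw [hLB, hLR, Category.assoc, hε0, ← Category.assoc, hB1ε, Category.assoc,
        ← hpb.w, ← Category.assoc, P'.ε_comm]
  -- (I) : α ≫ β = 𝟙
  have hαβ : α ≫ β = 𝟙 PW.obj := by
    refine PW.hom_ext' (u := PW.π) ?_ (Category.id_comp _) PW.codFst PW.codSnd
      PW.cod_isPullback ?_
    · rw [Category.assoc, hβ, ← Category.assoc, hα, ht]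
    · have hid : PW.cod_isPullback.lift (PW.codFst ≫ 𝟙 PW.obj) PW.codSnd
          (by rw [Category.assoc, Category.id_comp]; exact PW.cod_isPullback.w) =
          𝟙 PW.cod := by
        apply PW.cod_isPullback.hom_ext
        · rw [PW.cod_isPullback.lift_fst, Category.id_comp, Category.comp_id]
        · rw [PW.cod_isPullback.lift_snd, Category.id_comp]
      have hAB : PW.cod_isPullback.lift (PW.codFst ≫ α ≫ β) PW.codSnd
          (by rw [Category.assoc]
              rw [show (α ≫ β) ≫ PW.π = PW.π by
                rw [Category.assoc, hβ, ← Category.assoc, hα, ht]]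
              exact PW.cod_isPullback.w) = A1 ≫ B1 := by
        apply PW.cod_isPullback.hom_ext
        · rw [PW.cod_isPullback.lift_fst, Category.assoc, hB1f,
            reassoc_of% hA1f]
        · rw [PW.cod_isPullback.lift_snd, Category.assoc, hB1s, ← Category.assoc,
            hA1s, hqs0_snd]
      rw [hAB, hid, Category.id_comp, Category.assoc, hB1ε, ← Category.assoc,
        hA1ε, hk1s]
  -- (III) : β ≫ α = 𝟙
  have hBq : B1 ≫ qs0 = P'.codSnd := by
    apply P.cod_isPullback.hom_ext
    · rw [Category.assoc, hqs0_fst, ← Category.assoc, hB1f, Category.assoc, hβt]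
      exact P'.cod_isPullback.w
    · rw [Category.assoc, hqs0_snd, hB1s]
  have hβα : β ≫ α = 𝟙 P'.obj := by
    refine P'.hom_ext' (u := P'.π) ?_ (Category.id_comp _) P'.codFst P'.codSnd
      P'.cod_isPullback ?_
    · rw [Category.assoc, hα, hβt]
    · have hid : P'.cod_isPullback.lift (P'.codFst ≫ 𝟙 P'.obj) P'.codSnd
          (by rw [Category.assoc, Category.id_comp]; exact P'.cod_isPullback.w) =
          𝟙 P'.cod := by
        apply P'.cod_isPullback.hom_ext
        · rw [P'.cod_isPullback.lift_fst, Category.id_comp, Category.comp_id]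
        · rw [P'.cod_isPullback.lift_snd, Category.id_comp]
      have hBA : P'.cod_isPullback.lift (P'.codFst ≫ β ≫ α) P'.codSnd
          (by rw [Category.assoc]
              rw [show (β ≫ α) ≫ P'.π = P'.π by rw [Category.assoc, hα, hβt]]
              exact P'.cod_isPullback.w) = B1 ≫ A1 := by
        apply P'.cod_isPullback.hom_ext
        · rw [P'.cod_isPullback.lift_fst, Category.assoc, hA1f,
            reassoc_of% hB1f]
        · rw [P'.cod_isPullback.lift_snd, Category.assoc, hA1s, hBq]
      have hB1k1 : B1 ≫ k1 = P'.ε := by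
        apply hpb.hom_ext
        · rw [Category.assoc, hk1e, hBq, P'.ε_comm]
        · rw [Category.assoc, hk1s, hB1ε]
      rw [hBA, hid, Category.id_comp, Category.assoc, hA1ε, hB1k1]
  exact ⟨⟨α, β, hαβ, hβα⟩, hα⟩

end Paper

open CategoryTheory Limits Paper in
/-- with `q := f_* g`, `f'` the pullback of `f` along `q` and `ε` the
counit of `f^* ⊣ f_*` at `g`, if `h : W ⟶ Z` is an `R`-map between objects `W` and
`Z` of `R(Y)`, and `H` is a class of maps stable under pre- and post-composition
with isomorphisms, then `f_* h` is an `H`-map iff the underlying map of the object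
`f'_* (ε^* h)` of `R(f_* Z)` is an `H`-map. -/
theorem pushforward_stability {C : Type*} [Category C] (D : PiClan C)
    {X Y Z W : C} (g : Z ⟶ Y) (f : Y ⟶ X) (hg : D.R g) (hf : D.R f)
    (h : W ⟶ Z) (hh : D.R h)
    (H : MorphismProperty C) (hH : H.RespectsIso) :
    H (D.pushMap f (h ≫ g) g hf (D.compMem h g hh hg) hg h rfl) ↔
    H ((D.push (D.push f g hf hg).codFst
        (D.pbFst (D.push f g hf hg).ε h hh)
        (D.pbMem (D.push f g hf hg).cod_isPullback hf)
        (D.pbFst_mem (D.push f g hf hg).ε h hh)).π) := by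
  obtain ⟨i, hi⟩ := Paper.push_distrib (D.push f g hf hg)
    (D.push f (h ≫ g) hf (D.compMem h g hh hg))
    (D.pb_isPullback (D.push f g hf hg).ε h hh)
    (D.push (D.push f g hf hg).codFst (D.pbFst (D.push f g hf hg).ε h hh)
      (D.pbMem (D.push f g hf hg).cod_isPullback hf)
      (D.pbFst_mem (D.push f g hf hg).ε h hh))
    (D.pushMap f (h ≫ g) g hf (D.compMem h g hh hg) hg h rfl) rfl
  rw [← hi]
  haveI := hH
  exact MorphismProperty.cancel_left_of_respectsIso H i.hom _
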